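/- Let ℝ⁴₊ := {x ∈ ℝ⁴ : x₂² + x₃² + x₄² ≤ 2x₁x₂ and x₁ ≥ 0} (a linearly transformed ice cream cone) and let A ∈ ℝ^{4×4} be the block-diagonal matrix with upper-left 2×2 block [[0,1],[0,0]] and lower-right 2×2 block [[0, 4π],[−π, 0]]. Then the semigroup (e^{tA})_{t≥0} is individually eventually nonnegative with respect to ℝ⁴₊: for each x ∈ ℝ⁴₊ there exists t₀ ≥ 0 such that e^{tA} x ∈ ℝ⁴₊ for all t ≥ t₀. -/

import Mathlib

open scoped Matrix

/-- The linearly transformed ice cream cone in `ℝ⁴`. -/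
def transformedIceCreamCone : Set (Fin 4 → ℝ) :=
  {x | (x 1) ^ 2 + (x 2) ^ 2 + (x 3) ^ 2 ≤ 2 * x 0 * x 1 ∧ 0 ≤ x 0}

/-- The block-diagonal matrix with blocks `[[0,1],[0,0]]` and `[[0,4π],[-π,0]]`. -/
noncomputable def exampleMatrixA : Matrix (Fin 4) (Fin 4) ℝ :=
  !![0, 1, 0, 0; 0, 0, 0, 0; 0, 0, 0, 4 * Real.pi; 0, 0, -Real.pi, 0]

noncomputable def expCand (t : ℝ) : Matrix (Fin 4) (Fin 4) ℝ :=
  !![1, 0, 0, 0; 0, 1, 0, 0; 0, 0, 0, 0; 0, 0, 0, 0]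
  + t • !![0, 1, 0, 0; 0, 0, 0, 0; 0, 0, 0, 0; 0, 0, 0, 0]
  + Real.cos (2 * Real.pi * t) • !![0, 0, 0, 0; 0, 0, 0, 0; 0, 0, 1, 0; 0, 0, 0, 1]
  + Real.sin (2 * Real.pi * t) • !![0, 0, 0, 0; 0, 0, 0, 0; 0, 0, 0, 2; 0, 0, -(1/2), 0]

attribute [local instance] Matrix.linftyOpNormedRing Matrix.linftyOpNormedAlgebra

set_option maxHeartbeats 1000000 in
theorem mulA_expCand (s : ℝ) :
    exampleMatrixA * expCand s =
      (0 : Matrix (Fin 4) (Fin 4) ℝ)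
        + (1 : ℝ) • !![0, 1, 0, 0; 0, 0, 0, 0; 0, 0, 0, 0; 0, 0, 0, 0]
        + (-(2 * Real.pi) * Real.sin (2 * Real.pi * s)) • !![0, 0, 0, 0; 0, 0, 0, 0; 0, 0, 1, 0; 0, 0, 0, 1]
        + ((2 * Real.pi) * Real.cos (2 * Real.pi * s)) • !![0, 0, 0, 0; 0, 0, 0, 0; 0, 0, 0, 2; 0, 0, -(1/2), 0] := by
  ext i j
  fin_cases i <;> fin_cases j <;>
    (simp [exampleMatrixA, expCand, Matrix.mul_apply, Fin.sum_univ_four,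
      Matrix.vecHead, Matrix.vecTail]; try ring)

theorem hasDerivAt_expCand (s : ℝ) :
    HasDerivAt expCand (exampleMatrixA * expCand s) s := by
  have h1 : HasDerivAt (fun t : ℝ => t) 1 s := hasDerivAt_id s
  have hc : HasDerivAt (fun t : ℝ => Real.cos (2 * Real.pi * t))
      (-(2 * Real.pi) * Real.sin (2 * Real.pi * s)) s := by
    have := (Real.hasDerivAt_cos (2 * Real.pi * s)).comp s
      ((hasDerivAt_id s).const_mul (2 * Real.pi))
    exact this.congr_deriv (by ring)
  have hs : HasDerivAt (fun t : ℝ => Real.sin (2 * Real.pi * t))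
      ((2 * Real.pi) * Real.cos (2 * Real.pi * s)) s := by
    have := (Real.hasDerivAt_sin (2 * Real.pi * s)).comp s
      ((hasDerivAt_id s).const_mul (2 * Real.pi))
    exact this.congr_deriv (by ring)
  have H : HasDerivAt expCand
      ((0 : Matrix (Fin 4) (Fin 4) ℝ)
        + (1 : ℝ) • !![0, 1, 0, 0; 0, 0, 0, 0; 0, 0, 0, 0; 0, 0, 0, 0]
        + (-(2 * Real.pi) * Real.sin (2 * Real.pi * s)) • !![0, 0, 0, 0; 0, 0, 0, 0; 0, 0, 1, 0; 0, 0, 0, 1]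
        + ((2 * Real.pi) * Real.cos (2 * Real.pi * s)) • !![0, 0, 0, 0; 0, 0, 0, 0; 0, 0, 0, 2; 0, 0, -(1/2), 0]) s := by
    exact (((hasDerivAt_const s _).add (h1.smul_const _)).add (hc.smul_const _)).add
      (hs.smul_const _)
  convert H using 1
  exact mulA_expCand s

theorem exp_eq_expCand (t : ℝ) :
    NormedSpace.exp (t • exampleMatrixA) = expCand t := by
  set A := exampleMatrixA
  have hg : ∀ s : ℝ, HasDerivAt (fun u : ℝ => NormedSpace.exp ((-u) • A) * expCand u)
      (0 : Matrix (Fin 4) (Fin 4) ℝ) s := by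
    intro s
    have he : HasDerivAt (fun u : ℝ => NormedSpace.exp ((-u) • A))
        ((-1 : ℝ) • (NormedSpace.exp ((-s) • A) * A)) s := by
      have hf := hasDerivAt_exp_smul_const (𝕂 := ℝ) A (-s)
      have hneg : HasDerivAt (fun u : ℝ => -u) (-1 : ℝ) s := (hasDerivAt_id s).neg
      exact hf.scomp s hneg
    have := he.mul (hasDerivAt_expCand s)
    refine this.congr_deriv ?_
    symm
    simp only [neg_one_smul, neg_mul]
    rw [mul_assoc]
    abel
  have hconst : ∀ s : ℝ, (fun u : ℝ => NormedSpace.exp ((-u) • A) * expCand u) s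
      = (fun u : ℝ => NormedSpace.exp ((-u) • A) * expCand u) 0 := by
    intro s
    exact is_const_of_deriv_eq_zero (fun x => (hg x).differentiableAt)
      (fun x => (hg x).deriv) s 0
  have h0 : NormedSpace.exp ((-(0:ℝ)) • A) * expCand 0 = 1 := by
    have e0 : expCand 0 = 1 := by
      ext i j
      fin_cases i <;> fin_cases j <;> simp [expCand, Matrix.one_apply, Matrix.vecHead, Matrix.vecTail]
    rw [e0, neg_zero, zero_smul, NormedSpace.exp_zero, one_mul]
  have hgt : NormedSpace.exp ((-t) • A) * expCand t = 1 := by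
    exact (hconst t).trans h0
  have hinv : NormedSpace.exp (t • A) * NormedSpace.exp ((-t) • A) = 1 := by
    rw [← Matrix.exp_add_of_commute _ _ (((Commute.refl A).smul_left t).smul_right (-t))]
    rw [← add_smul, add_neg_cancel, zero_smul, NormedSpace.exp_zero]
  calc NormedSpace.exp (t • A)
      = NormedSpace.exp (t • A) * (NormedSpace.exp ((-t) • A) * expCand t) := by
        rw [hgt, mul_one]
    _ = (NormedSpace.exp (t • A) * NormedSpace.exp ((-t) • A)) * expCand t := by
        rw [mul_assoc]
    _ = expCand t := by rw [hinv, one_mul]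

theorem mulVec_expCand (t : ℝ) (x : Fin 4 → ℝ) :
    expCand t *ᵥ x = ![x 0 + t * x 1, x 1,
      Real.cos (2*Real.pi*t) * x 2 + 2 * Real.sin (2*Real.pi*t) * x 3,
      -(Real.sin (2*Real.pi*t))/2 * x 2 + Real.cos (2*Real.pi*t) * x 3] := by
  funext i
  fin_cases i <;>
    (simp [expCand, Matrix.mulVec, dotProduct, Fin.sum_univ_four,
      Matrix.vecHead, Matrix.vecTail]; try ring; try exact Or.inl trivial)

/-- The semigroup `(e^{tA})_{t ≥ 0}` is individually eventually nonnegative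
with respect to the transformed ice cream cone. -/
theorem exampleSemigroup_individually_eventually_nonneg :
    ∀ x ∈ transformedIceCreamCone, ∃ t₀ : ℝ, 0 ≤ t₀ ∧ ∀ t : ℝ, t₀ ≤ t →
      NormedSpace.exp (t • exampleMatrixA) *ᵥ x ∈ transformedIceCreamCone := by
  rintro x ⟨hq, hx0⟩
  have hx1 : 0 ≤ x 1 := by nlinarith [sq_nonneg (x 1), sq_nonneg (x 2), sq_nonneg (x 3)]
  rcases eq_or_lt_of_le hx1 with h0 | hpos
  · refine ⟨0, le_refl 0, fun t _ => ?_⟩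
    have h2 : x 2 = 0 := by nlinarith [sq_nonneg (x 2), sq_nonneg (x 3)]
    have h3 : x 3 = 0 := by nlinarith [sq_nonneg (x 2), sq_nonneg (x 3)]
    rw [exp_eq_expCand, mulVec_expCand]
    constructor
    · simp [← h0, h2, h3]
    · simpa [← h0, h2, h3] using hx0
  · refine ⟨6 * x 0 / x 1, by positivity, fun t ht => ?_⟩
    have h6 : 6 * x 0 ≤ t * x 1 := by
      rw [div_le_iff₀ hpos] at ht; linarith
    rw [exp_eq_expCand, mulVec_expCand]
    set c := Real.cos (2*Real.pi*t) with hcdef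
    set s := Real.sin (2*Real.pi*t) with hsdef
    have hcs : s ^ 2 + c ^ 2 = 1 := Real.sin_sq_add_cos_sq _
    have hQ : (c * x 2 + 2 * s * x 3) ^ 2 + (-s/2 * x 2 + c * x 3) ^ 2
        ≤ 7 * ((x 2) ^ 2 + (x 3) ^ 2) := by
      nlinarith [sq_nonneg (s/2 * x 2 - c * x 3), sq_nonneg (x 2), sq_nonneg (x 3),
        sq_nonneg (s * x 2), sq_nonneg (s * x 3), sq_nonneg (c * x 2), sq_nonneg (c * x 3),
        sq_nonneg (x 2 + x 3), sq_nonneg (x 2 - x 3)]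
    have h7 : 6 * x 0 * x 1 ≤ t * x 1 * x 1 :=
      mul_le_mul_of_nonneg_right h6 hx1
    constructor
    · show (x 1) ^ 2 + (c * x 2 + 2 * s * x 3) ^ 2 + (-s/2 * x 2 + c * x 3) ^ 2
        ≤ 2 * (x 0 + t * x 1) * x 1
      nlinarith [hQ, hq, h7]
    · show (0:ℝ) ≤ x 0 + t * x 1
      linarith
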